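/- If R = D·V with V invertible upper triangular and R column-reduced, then the multiset of pivot pairs {(low(j), j) : R[·,j] ≠ 0} together with the unpaired indices determines the persistence diagram, and rank of the submatrix D[{i,...,n}, {1,...,j}] equals the number of pivots (i', j') with i' ≥ i and j' ≤ j. -/

import Mathlib

open Matrix


/-- `IsLow R i j` : entry `(i,j)` is the lowest nonzero entry (pivot) of column `j`. -/
def IsLow {F : Type*} [Field F] {n : ℕ} (R : Matrix (Fin n) (Fin n) F)
    (i j : Fin n) : Prop :=
  R i j ≠ 0 ∧ ∀ i' : Fin n, i < i' → R i' j = 0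

open Matrix in
theorem isLow_unique {F : Type*} [Field F] {n : ℕ} {R : Matrix (Fin n) (Fin n) F}
    {a a' b : Fin n} (h : IsLow R a b) (h' : IsLow R a' b) : a = a' := by
  rcases lt_trichotomy a a' with hlt | heq | hgt
  · exact (h'.1 (h.2 a' hlt)).elim
  · exact heq
  · exact (h.1 (h'.2 a hgt)).elim

theorem exists_isLow {F : Type*} [Field F] {n : ℕ} {R : Matrix (Fin n) (Fin n) F}
    {a0 b : Fin n} (h : R a0 b ≠ 0) : ∃ a, IsLow R a b := by
  classical
  set s : Finset (Fin n) := Finset.univ.filter (fun a => R a b ≠ 0) with hs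
  have hne : s.Nonempty := ⟨a0, by simp [hs, h]⟩
  refine ⟨s.max' hne, ?_, ?_⟩
  · have := s.max'_mem hne; simpa [hs] using this
  · intro a' ha'
    by_contra hz
    exact absurd (Finset.le_max' s a' (by simp [hs, hz])) (not_le.mpr ha')

/-- Lower-left rank characterization of persistence pairings: if `R = D·V`
with `V` invertible upper triangular and `R` column-reduced, then the rank of
the lower-left submatrix `D[{i,…,n},{1,…,j}]` equals the number of pivot pairs
`(i', j')` of `R` with `i' ≥ i` and `j' ≤ j`. -/
theorem stmt_16 {F : Type*} [Field F] {n : ℕ}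
    (D V R : Matrix (Fin n) (Fin n) F)
    (hVu : ∀ i j : Fin n, j < i → V i j = 0)
    (hV : IsUnit V.det) (hR : R = D * V)
    (hred : ∀ (j j' i : Fin n), IsLow R i j → IsLow R i j' → j = j') :
    ∀ i j : Fin n,
      (D.submatrix (fun a : {a : Fin n // i ≤ a} => (a : Fin n))
          (fun b : {b : Fin n // b ≤ j} => (b : Fin n))).rank =
        Nat.card {p : Fin n × Fin n //
          IsLow R p.1 p.2 ∧ i ≤ p.1 ∧ p.2 ≤ j} := by
  classical
  intro i j
  -- diagonal entries of V are nonzero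
  have hdet : V.det = ∏ k, V k k :=
    Matrix.det_of_upperTriangular (fun a b hab => hVu a b hab)
  have hVd : ∀ k : Fin n, V k k ≠ 0 := by
    intro k hk
    rw [hdet] at hV
    exact hV.ne_zero (Finset.prod_eq_zero (Finset.mem_univ k) hk)
  set W : Matrix {b : Fin n // b ≤ j} {b : Fin n // b ≤ j} F :=
    V.submatrix (fun b => (b : Fin n)) (fun b => (b : Fin n)) with hW
  have hWdet : IsUnit W.det := by
    have ht : W.BlockTriangular id := by
      intro a b hab
      exact hVu a b (Subtype.coe_lt_coe.mpr hab)
    rw [Matrix.det_of_upperTriangular ht]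
    exact isUnit_iff_ne_zero.mpr
      (Finset.prod_ne_zero_iff.mpr fun b _ => hVd b)
  set S : Matrix {a : Fin n // i ≤ a} {b : Fin n // b ≤ j} F :=
    R.submatrix (fun a : {a : Fin n // i ≤ a} => (a : Fin n))
      (fun b : {b : Fin n // b ≤ j} => (b : Fin n)) with hS
  -- factorization of the submatrix
  have hfac : S = (D.submatrix (fun a : {a : Fin n // i ≤ a} => (a : Fin n))
      (fun b : {b : Fin n // b ≤ j} => (b : Fin n))) * W := by
    ext a b
    simp only [hS, hW, Matrix.submatrix_apply, Matrix.mul_apply, hR]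
    rw [← Finset.sum_subtype (s := Finset.univ.filter (fun k : Fin n => k ≤ j))
        (fun k => by simp) (fun k => D (a : Fin n) k * V k (b : Fin n))]
    refine (Finset.sum_filter_of_ne fun k _ hk => ?_).symm
    by_contra hkj
    apply hk
    show D (a : Fin n) k * V k (b : Fin n) = 0
    rw [hVu k (b : Fin n) (lt_of_le_of_lt b.2 (not_le.mp hkj)), mul_zero]
  have hrank1 : S.rank = (D.submatrix (fun a : {a : Fin n // i ≤ a} => (a : Fin n))
      (fun b : {b : Fin n // b ≤ j} => (b : Fin n))).rank := by
    rw [hfac]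
    exact Matrix.rank_mul_eq_left_of_isUnit_det W _ hWdet
  -- pivot columns
  set P : Set {b : Fin n // b ≤ j} :=
    {b | ∃ a : Fin n, i ≤ a ∧ IsLow R a (b : Fin n)} with hP
  have hzero : ∀ b : {b : Fin n // b ≤ j}, b ∉ P → Sᵀ b = 0 := by
    intro b hb
    funext a
    simp only [Matrix.transpose_apply, hS, Matrix.submatrix_apply, Pi.zero_apply]
    by_contra h
    obtain ⟨a0, ha0⟩ := exists_isLow h
    by_cases hia : i ≤ a0
    · exact hb ⟨a0, hia, ha0⟩
    · exact h (ha0.2 (a : Fin n) (lt_of_lt_of_le (not_le.mp hia) a.2))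
  have hpivspec : ∀ b : ↥P, ∃ a : Fin n, i ≤ a ∧ IsLow R a ((b : {b : Fin n // b ≤ j}) : Fin n) :=
    fun b => b.2
  choose piv hpiv1 hpiv2 using hpivspec
  have hpivinj : Function.Injective piv := by
    intro b b' h
    have := hred _ _ _ (hpiv2 b) (h ▸ hpiv2 b')
    exact Subtype.ext (Subtype.ext this)
  have hli : LinearIndependent F (fun b : ↥P => Sᵀ (b : {b : Fin n // b ≤ j})) := by
    rw [linearIndependent_iff']
    intro s c hsum b0' hb0'
    by_contra hc0
    set t := s.filter (fun b => c b ≠ 0) with ht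
    have htne : t.Nonempty := ⟨b0', by simp [ht, hb0', hc0]⟩
    obtain ⟨b0, hb0t, hmax⟩ := t.exists_max_image piv htne
    have hb0s : b0 ∈ s := (Finset.mem_filter.mp hb0t).1
    have hc0b0 : c b0 ≠ 0 := (Finset.mem_filter.mp hb0t).2
    have heval := congrFun hsum ⟨piv b0, hpiv1 b0⟩
    simp only [Finset.sum_apply, Pi.smul_apply, Matrix.transpose_apply, hS,
      Matrix.submatrix_apply, smul_eq_mul, Pi.zero_apply] at heval
    rw [Finset.sum_eq_single_of_mem b0 hb0s (fun b hb hne => ?_)] at heval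
    · exact hc0b0 ((mul_eq_zero.mp heval).resolve_right (hpiv2 b0).1)
    · by_cases hcb : c b = 0
      · rw [hcb, zero_mul]
      · have hbt : b ∈ t := Finset.mem_filter.mpr ⟨hb, hcb⟩
        have hlt : piv b < piv b0 :=
          lt_of_le_of_ne (hmax b hbt) (fun h => hne (hpivinj h))
        rw [(hpiv2 b).2 (piv b0) hlt, mul_zero]
  have hspan : Submodule.span F (Set.range Sᵀ) =
      Submodule.span F (Set.range fun b : ↥P => Sᵀ (b : {b : Fin n // b ≤ j})) := by
    apply le_antisymm
    · rw [Submodule.span_le]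
      rintro _ ⟨b, rfl⟩
      by_cases hb : b ∈ P
      · exact Submodule.subset_span ⟨⟨b, hb⟩, rfl⟩
      · rw [hzero b hb]; exact (Submodule.span F _).zero_mem
    · rw [Submodule.span_le]
      rintro _ ⟨b, rfl⟩
      exact Submodule.subset_span ⟨(b : {b : Fin n // b ≤ j}), rfl⟩
  haveI : Fintype ↥P := Fintype.ofFinite _
  have hrank2 : S.rank = Nat.card ↥P := by
    rw [Matrix.rank_eq_finrank_span_cols, show S.col = Sᵀ from rfl, hspan, finrank_span_eq_card hli,
      Nat.card_eq_fintype_card]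
  have hcount : Nat.card {p : Fin n × Fin n //
      IsLow R p.1 p.2 ∧ i ≤ p.1 ∧ p.2 ≤ j} = Nat.card ↥P := by
    apply Nat.card_eq_of_bijective
      (fun p => (⟨⟨p.1.2, p.2.2.2⟩, ⟨p.1.1, p.2.2.1, p.2.1⟩⟩ : ↥P))
    constructor
    · rintro ⟨⟨a, b⟩, ha⟩ ⟨⟨a', b'⟩, ha'⟩ h
      simp only [Subtype.mk.injEq] at h
      have hbb : b = b' := h
      have haa : a = a' := isLow_unique ha.1 (hbb ▸ ha'.1)
      exact Subtype.ext (Prod.ext haa hbb)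
    · rintro ⟨⟨b, hbj⟩, hbP⟩
      obtain ⟨a, hia, hlow⟩ := hbP
      exact ⟨⟨(a, b), hlow, hia, hbj⟩, rfl⟩
  rw [← hrank1, hrank2, ← hcount]
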